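/- Fix any μ ∈ ℝ^d and any d×d symmetric positive definite matrix Σ, and let h be the map (μ̂, Σ̂) ↦ (Σ^{1/2}μ̂ + μ, Σ^{1/2}Σ̂Σ^{1/2}) on pairs consisting of a vector in ℝ^d and a d×d symmetric positive definite matrix. Then for any (measurable) set S of such pairs, the normalized volume of h(S) equals the normalized volume of S: nvol(h(S)) = nvol(S). -/

import Mathlib

open MeasureTheory ProbabilityTheory Matrix Real
open scoped ENNReal

noncomputable section

instance matMS {d : ℕ} : MeasurableSpace (Matrix (Fin d) (Fin d) ℝ) := MeasurableSpace.pi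

/-- The `ℓ²`-operator norm of a real `d × d` matrix. -/
def opNorm {d : ℕ} (M : Matrix (Fin d) (Fin d) ℝ) : ℝ :=
  ‖(Matrix.toEuclideanCLM (𝕜 := ℝ) M)‖

/-- The Frobenius norm of a real `d × d` matrix. -/
def frobNorm {d : ℕ} (M : Matrix (Fin d) (Fin d) ℝ) : ℝ :=
  Real.sqrt (∑ i, ∑ j, (M i j) ^ 2)

/-- The Euclidean norm of a vector in `ℝ^d`. -/
def vnorm {d : ℕ} (v : Fin d → ℝ) : ℝ := Real.sqrt (∑ i, (v i) ^ 2)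

/-- The positive semidefinite square root of a matrix (junk value `0` if the matrix is not
positive semidefinite). -/
def msqrt {d : ℕ} (S : Matrix (Fin d) (Fin d) ℝ) : Matrix (Fin d) (Fin d) ℝ :=
  letI := Classical.propDecidable S.PosSemidef
  if h : S.PosSemidef then h.1.eigenvectorUnitary.1 *
    diagonal ((↑) ∘ (Real.sqrt ·) ∘ h.1.eigenvalues) *
    (star h.1.eigenvectorUnitary : Matrix (Fin d) (Fin d) ℝ) else 0

/-- `Σ^{-1/2}`, the inverse of the positive square root. -/
def sqrtInv {d : ℕ} (S : Matrix (Fin d) (Fin d) ℝ) : Matrix (Fin d) (Fin d) ℝ :=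
  (msqrt S)⁻¹

/-- `(μ̂, Σ̂) ≈_{γ,ρ,τ} (μ, Σ)`: spectral, Frobenius, and Mahalanobis closeness. -/
def approx {d : ℕ} (γ ρ τ : ℝ) (p q : (Fin d → ℝ) × Matrix (Fin d) (Fin d) ℝ) : Prop :=
  opNorm (sqrtInv q.2 * p.2 * sqrtInv q.2 - 1) ≤ γ ∧
  frobNorm (sqrtInv q.2 * p.2 * sqrtInv q.2 - 1) ≤ ρ ∧
  vnorm (sqrtInv q.2 *ᵥ (p.1 - q.1)) ≤ τ

/-- The index set for the upper-triangular entries of a `d × d` matrix. -/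
abbrev UT (d : ℕ) := { p : Fin d × Fin d // p.1 ≤ p.2 }

/-- `Proj(μ, Σ)`: the coordinates of `μ` together with the upper-triangular entries of `Σ`. -/
def proj {d : ℕ} (q : (Fin d → ℝ) × Matrix (Fin d) (Fin d) ℝ) :
    (Fin d → ℝ) × (UT d → ℝ) :=
  (q.1, fun p => q.2 p.1.1 p.1.2)

/-- Reconstruct the determinant of the symmetric matrix from its projected coordinates. -/
def detAt {d : ℕ} (θ : (Fin d → ℝ) × (UT d → ℝ)) : ℝ :=
  (Matrix.of fun i j : Fin d =>
    if h : i ≤ j then θ.2 ⟨(i, j), h⟩ else θ.2 ⟨(j, i), le_of_not_ge h⟩).det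

/-- The normalized volume `nvol(Ω) = ∫_{Proj(Ω)} det(Σ)^{-(d+2)/2} dθ`. -/
def nvol {d : ℕ} (Ω : Set ((Fin d → ℝ) × Matrix (Fin d) (Fin d) ℝ)) : ℝ≥0∞ :=
  ∫⁻ θ in proj '' Ω, ENNReal.ofReal (detAt θ ^ (-((d : ℝ) + 2) / 2)) ∂volume


/-! ### Auxiliary machinery for the proof -/

section Aux

open Matrix

/-- Reconstruct a symmetric matrix from its upper-triangular coordinates. -/
def symMat {d : ℕ} (u : UT d → ℝ) : Matrix (Fin d) (Fin d) ℝ :=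
  Matrix.of fun i j : Fin d =>
    if h : i ≤ j then u ⟨(i, j), h⟩ else u ⟨(j, i), le_of_not_ge h⟩

lemma symMat_transpose {d : ℕ} (u : UT d → ℝ) : (symMat u)ᵀ = symMat u := by
  ext i j
  simp only [transpose_apply, symMat, of_apply]
  rcases le_or_gt i j with h | h
  · rcases eq_or_lt_of_le h with rfl | h'
    · rfl
    · rw [dif_neg (not_le.2 h'), dif_pos h]
  · rw [dif_pos h.le, dif_neg (not_le.2 h)]

/-- Extracting upper-triangular coordinates, as a linear map. -/
def triL (d : ℕ) : Matrix (Fin d) (Fin d) ℝ →ₗ[ℝ] (UT d → ℝ) where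
  toFun M p := M p.1.1 p.1.2
  map_add' _ _ := rfl
  map_smul' _ _ := rfl

/-- `symMat`, as a linear map. -/
def symL (d : ℕ) : (UT d → ℝ) →ₗ[ℝ] Matrix (Fin d) (Fin d) ℝ where
  toFun := symMat
  map_add' u v := by
    ext i j
    simp only [symMat, of_apply, Matrix.add_apply, Pi.add_apply]
    split <;> rfl
  map_smul' c u := by
    ext i j
    simp only [symMat, of_apply, Matrix.smul_apply, Pi.smul_apply, RingHom.id_apply]
    split <;> rfl

lemma triL_symL {d : ℕ} (u : UT d → ℝ) : triL d (symL d u) = u := by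
  funext p
  show symMat u p.1.1 p.1.2 = u p
  simp only [symMat, of_apply, dif_pos p.2]

lemma symL_triL {d : ℕ} {M : Matrix (Fin d) (Fin d) ℝ} (hM : Mᵀ = M) :
    symL d (triL d M) = M := by
  ext i j
  show symMat _ i j = M i j
  simp only [symMat, of_apply]
  split
  · rfl
  · show M j i = M i j
    conv_lhs => rw [← hM]
    rfl

lemma prod_UT {d : ℕ} (f : Fin d → ℝ) :
    ∏ p : UT d, (f p.1.1 * f p.1.2) = (∏ k, f k) ^ (d + 1) := by
  have hsub : ∏ x ∈ (Finset.univ.filter fun x : Fin d × Fin d => x.1 ≤ x.2), (f x.1 * f x.2)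
      = ∏ p : UT d, (f p.1.1 * f p.1.2) :=
    Finset.prod_subtype _ (by simp) (fun x : Fin d × Fin d => f x.1 * f x.2)
  rw [← hsub, Finset.prod_filter, Fintype.prod_prod_type]
  have split : ∀ i j : Fin d,
      (if i ≤ j then f i * f j else 1)
        = (if i ≤ j then f i else 1) * (if i ≤ j then f j else 1) := by
    intro i j; split <;> simp
  simp_rw [split, Finset.prod_mul_distrib]
  have hIci : ∀ i : Fin d, (Finset.univ.filter fun j => i ≤ j) = Finset.Ici i := by
    intro i; ext x; simp
  have hIic : ∀ j : Fin d, (Finset.univ.filter fun i : Fin d => i ≤ j) = Finset.Iic j := by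
    intro j; ext x; simp
  have h1 : ∏ i : Fin d, ∏ j : Fin d, (if i ≤ j then f i else 1)
      = ∏ i : Fin d, f i ^ (d - i.1) := by
    refine Finset.prod_congr rfl fun i _ => ?_
    rw [← Finset.prod_filter, hIci, Finset.prod_const, Fin.card_Ici]
  have h2 : ∏ i : Fin d, ∏ j : Fin d, (if i ≤ j then f j else 1)
      = ∏ j : Fin d, f j ^ (j.1 + 1) := by
    rw [Finset.prod_comm]
    refine Finset.prod_congr rfl fun j _ => ?_
    rw [← Finset.prod_filter, hIic, Finset.prod_const, Fin.card_Iic]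
  rw [h1, h2, ← Finset.prod_mul_distrib, ← Finset.prod_pow]
  refine Finset.prod_congr rfl fun i _ => ?_
  rw [← pow_add]
  congr 1
  have := i.isLt
  omega

/-- Conjugation `M ↦ B * M * C`, as a linear map on matrices. -/
def conjL {d : ℕ} (B C : Matrix (Fin d) (Fin d) ℝ) :
    Matrix (Fin d) (Fin d) ℝ →ₗ[ℝ] Matrix (Fin d) (Fin d) ℝ where
  toFun M := B * M * C
  map_add' X Y := by
    show B * (X + Y) * C = B * X * C + B * Y * C
    rw [Matrix.mul_add, Matrix.add_mul]
  map_smul' c X := by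
    show B * (c • X) * C = c • (B * X * C)
    rw [Matrix.mul_smul, Matrix.smul_mul]

/-- The conjugation map induced on upper-triangular coordinates. -/
def phiL {d : ℕ} (A : Matrix (Fin d) (Fin d) ℝ) : (UT d → ℝ) →ₗ[ℝ] (UT d → ℝ) :=
  triL d ∘ₗ conjL A A ∘ₗ symL d

lemma conj_symmetric {d : ℕ} {B : Matrix (Fin d) (Fin d) ℝ} (M : Matrix (Fin d) (Fin d) ℝ)
    (hM : Mᵀ = M) : (B * M * Bᵀ)ᵀ = B * M * Bᵀ := by
  rw [Matrix.transpose_mul, Matrix.transpose_mul, Matrix.transpose_transpose, hM,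
    Matrix.mul_assoc]

lemma diag_conj_symMat {d : ℕ} (lam : Fin d → ℝ) (u : UT d → ℝ) :
    Matrix.diagonal lam * symMat u * Matrix.diagonal lam
      = symMat (fun p => (lam p.1.1 * lam p.1.2) * u p) := by
  ext i j
  have h1 : (Matrix.diagonal lam * symMat u * Matrix.diagonal lam) i j
      = lam i * symMat u i j * lam j := by
    rw [Matrix.mul_diagonal, Matrix.diagonal_mul]
  rw [h1]
  simp only [symMat, of_apply]
  split
  · ring
  · ring

lemma det_phiL {d : ℕ} {A : Matrix (Fin d) (Fin d) ℝ} (hA : A.IsHermitian) :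
    LinearMap.det (phiL A) = A.det ^ (d + 1) := by
  set U : Matrix (Fin d) (Fin d) ℝ := (hA.eigenvectorUnitary : Matrix (Fin d) (Fin d) ℝ) with hU
  have hsU : star U = Uᵀ := by
    rw [Matrix.star_eq_conjTranspose, Matrix.conjTranspose_eq_transpose_of_trivial]
  have hUUt : U * Uᵀ = 1 := by
    rw [← hsU]; exact Matrix.mem_unitaryGroup_iff.mp hA.eigenvectorUnitary.2
  have hUtU : Uᵀ * U = 1 := by
    rw [← hsU]; exact Matrix.mem_unitaryGroup_iff'.mp hA.eigenvectorUnitary.2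
  set lam : Fin d → ℝ := RCLike.ofReal ∘ hA.eigenvalues with hlam
  have hspec : A = U * Matrix.diagonal lam * Uᵀ := by
    rw [← hsU]; exact hA.spectral_theorem
  have hdet : A.det = ∏ i, lam i := hA.det_eq_prod_eigenvalues
  set Ψ : (UT d → ℝ) →ₗ[ℝ] (UT d → ℝ) := triL d ∘ₗ conjL U Uᵀ ∘ₗ symL d with hΨ
  set Ψ' : (UT d → ℝ) →ₗ[ℝ] (UT d → ℝ) := triL d ∘ₗ conjL Uᵀ U ∘ₗ symL d with hΨ'
  have hU'sym : ∀ u : UT d → ℝ, (Uᵀ * symMat u * U)ᵀ = Uᵀ * symMat u * U := by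
    intro u
    have := conj_symmetric (B := Uᵀ) (symMat u) (symMat_transpose u)
    rwa [Matrix.transpose_transpose] at this
  have hUsym : ∀ u : UT d → ℝ, (U * symMat u * Uᵀ)ᵀ = U * symMat u * Uᵀ := fun u =>
    conj_symmetric (symMat u) (symMat_transpose u)
  have hΨΨ' : Ψ.comp Ψ' = LinearMap.id := by
    apply LinearMap.ext; intro u
    show triL d (U * symMat (triL d (Uᵀ * symMat u * U)) * Uᵀ) = u
    rw [show symMat (triL d (Uᵀ * symMat u * U)) = symL d (triL d (Uᵀ * symMat u * U)) from rfl,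
      symL_triL (hU'sym u)]
    have : U * (Uᵀ * symMat u * U) * Uᵀ = symMat u := by
      rw [← Matrix.mul_assoc, ← Matrix.mul_assoc, hUUt, Matrix.one_mul, Matrix.mul_assoc, hUUt,
        Matrix.mul_one]
    rw [this]
    exact triL_symL u
  have hdetΨ : LinearMap.det Ψ * LinearMap.det Ψ' = 1 := by
    rw [← LinearMap.det_comp, hΨΨ', LinearMap.det_id]
  have hΨne : LinearMap.det Ψ ≠ 0 := left_ne_zero_of_mul_eq_one hdetΨ
  set c : UT d → ℝ := fun p => lam p.1.1 * lam p.1.2 with hc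
  have hAU : A * U = U * Matrix.diagonal lam := by
    rw [hspec, Matrix.mul_assoc, hUtU, Matrix.mul_one]
  have hUA : Uᵀ * A = Matrix.diagonal lam * Uᵀ := by
    rw [hspec, ← Matrix.mul_assoc, ← Matrix.mul_assoc, hUtU, Matrix.one_mul]
  have hcommute : (phiL A).comp Ψ = Ψ.comp ((Matrix.diagonal c).mulVecLin) := by
    apply LinearMap.ext; intro u
    show triL d (A * symMat (triL d (U * symMat u * Uᵀ)) * A)
      = triL d (U * symMat ((Matrix.diagonal c).mulVec u) * Uᵀ)
    rw [show symMat (triL d (U * symMat u * Uᵀ)) = symL d (triL d (U * symMat u * Uᵀ)) from rfl,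
      symL_triL (hUsym u)]
    have hdiagvec : (Matrix.diagonal c).mulVec u = fun p => c p * u p := by
      funext p; rw [Matrix.mulVec_diagonal]
    have h2 : symMat ((Matrix.diagonal c).mulVec u)
        = Matrix.diagonal lam * symMat u * Matrix.diagonal lam := by
      rw [hdiagvec, diag_conj_symMat]
    rw [h2]
    congr 1
    calc A * (U * symMat u * Uᵀ) * A
        = (A * U) * symMat u * (Uᵀ * A) := by
          simp only [Matrix.mul_assoc]
      _ = U * (Matrix.diagonal lam * symMat u * Matrix.diagonal lam) * Uᵀ := by
          rw [hAU, hUA]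
          simp only [Matrix.mul_assoc]
  have hdetD : LinearMap.det ((Matrix.diagonal c).mulVecLin) = ∏ p, c p := by
    rw [← Matrix.toLin'_apply', LinearMap.det_toLin', Matrix.det_diagonal]
  have hmain : LinearMap.det (phiL A) * LinearMap.det Ψ
      = LinearMap.det Ψ * (∏ p, c p) := by
    rw [← LinearMap.det_comp, hcommute, LinearMap.det_comp, hdetD]
  have hfin : LinearMap.det (phiL A) = ∏ p, c p := by
    have h := hmain
    rw [mul_comm (LinearMap.det Ψ)] at h
    exact mul_right_cancel₀ hΨne h
  rw [hfin, hc, prod_UT, hdet]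

lemma det_prodMap {α β : Type*} [Fintype α] [DecidableEq α] [Fintype β] [DecidableEq β]
    (f : (α → ℝ) →ₗ[ℝ] (α → ℝ)) (g : (β → ℝ) →ₗ[ℝ] (β → ℝ)) :
    LinearMap.det (f.prodMap g) = LinearMap.det f * LinearMap.det g := by
  classical
  let b₁ := Pi.basisFun ℝ α
  let b₂ := Pi.basisFun ℝ β
  rw [← LinearMap.det_toMatrix (b₁.prod b₂), LinearMap.toMatrix_prodMap b₁ b₂ f g,
    Matrix.det_fromBlocks_zero₂₁, LinearMap.det_toMatrix, LinearMap.det_toMatrix]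

instance instAddHaarUTProd {d : ℕ} :
    MeasureTheory.Measure.IsAddHaarMeasure
      (MeasureTheory.volume : MeasureTheory.Measure ((Fin d → ℝ) × (UT d → ℝ))) :=
  MeasureTheory.Measure.prod.instIsAddHaarMeasure _ _

end Aux

/-- Lemma: the normalized volume is invariant under the map
`(μ̂, Σ̂) ↦ (Σ^{1/2} μ̂ + μ, Σ^{1/2} Σ̂ Σ^{1/2})`. -/
theorem nvol_invariant_under_scaling {d : ℕ} (μ : Fin d → ℝ)
    (S : Matrix (Fin d) (Fin d) ℝ) (hS : S.PosDef)
    (Ω : Set ((Fin d → ℝ) × Matrix (Fin d) (Fin d) ℝ))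
    (hΩ : MeasurableSet Ω) (hpos : ∀ p ∈ Ω, Matrix.PosDef p.2) :
    nvol ((fun p : (Fin d → ℝ) × Matrix (Fin d) (Fin d) ℝ =>
        (msqrt S *ᵥ p.1 + μ, msqrt S * p.2 * msqrt S)) '' Ω) = nvol Ω := by
  classical
  have hSsd : S.PosSemidef := hS.posSemidef
  set U : Matrix (Fin d) (Fin d) ℝ := (hSsd.1.eigenvectorUnitary : Matrix (Fin d) (Fin d) ℝ)
    with hU
  set D : Matrix (Fin d) (Fin d) ℝ := diagonal (fun i => Real.sqrt (hSsd.1.eigenvalues i))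
    with hD
  have hA_def : msqrt S = U * D * star U := by
    rw [msqrt]
    exact dif_pos hSsd
  set A : Matrix (Fin d) (Fin d) ℝ := msqrt S with hA
  have hAsd : A.PosSemidef := by
    rw [hA_def]
    exact (PosSemidef.diagonal (fun i => Real.sqrt_nonneg _)).mul_mul_conjTranspose_same U
  have hAh : A.IsHermitian := hAsd.1
  have hAt : Aᵀ = A := by
    rw [← Matrix.conjTranspose_eq_transpose_of_trivial]; exact hAh
  have hAA : A * A = S := by
    have hUU : star U * U = 1 := Matrix.mem_unitaryGroup_iff'.mp hSsd.1.eigenvectorUnitary.2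
    have hDD : D * D = diagonal (RCLike.ofReal ∘ hSsd.1.eigenvalues) := by
      rw [hD, diagonal_mul_diagonal]
      congr 1
      funext i
      simp [Real.mul_self_sqrt (hSsd.eigenvalues_nonneg i)]
    rw [hA_def]
    conv_rhs => rw [hSsd.1.spectral_theorem]
    rw [Unitary.conjStarAlgAut_apply, ← hDD]
    change U * D * star U * (U * D * star U) = U * (D * D) * star U
    simp only [Matrix.mul_assoc]
    rw [← Matrix.mul_assoc (star U) U, hUU, Matrix.one_mul]
  have hdetA : 0 < A.det := by
    have h1 : 0 ≤ A.det := by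
      rw [hAh.det_eq_prod_eigenvalues]
      exact Finset.prod_nonneg fun i _ => hAsd.eigenvalues_nonneg i
    have h2 : A.det * A.det = S.det := by rw [← Matrix.det_mul, hAA]
    rcases h1.lt_or_eq with h | h
    · exact h
    · exfalso
      have := hS.det_pos
      rw [← h2, ← h, mul_zero] at this
      exact lt_irrefl _ this
  have hdetAne : A.det ≠ 0 := hdetA.ne'
  have hdetAu : IsUnit A.det := isUnit_iff_ne_zero.mpr hdetAne
  have hconj : ∀ u : UT d → ℝ, (A * symMat u * A)ᵀ = A * symMat u * A := by
    intro u
    have := conj_symmetric (B := A) (symMat u) (symMat_transpose u)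
    rwa [hAt] at this
  -- the affine map on projected coordinates
  set L : ((Fin d → ℝ) × (UT d → ℝ)) →ₗ[ℝ] ((Fin d → ℝ) × (UT d → ℝ)) :=
    (Matrix.mulVecLin A).prodMap (phiL A) with hL
  have hdetL : LinearMap.det L = A.det ^ (d + 2) := by
    rw [hL, det_prodMap, det_phiL hAh, ← Matrix.toLin'_apply', LinearMap.det_toLin']
    ring
  set Lc : ((Fin d → ℝ) × (UT d → ℝ)) →L[ℝ] ((Fin d → ℝ) × (UT d → ℝ)) :=
    LinearMap.toContinuousLinearMap L with hLc
  have hLcL : (Lc : ((Fin d → ℝ) × (UT d → ℝ)) →ₗ[ℝ] ((Fin d → ℝ) × (UT d → ℝ))) = L :=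
    LinearMap.coe_toContinuousLinearMap L
  have hdetLc : Lc.det = A.det ^ (d + 2) := by
    rw [show Lc.det = LinearMap.det
      (Lc : ((Fin d → ℝ) × (UT d → ℝ)) →ₗ[ℝ] ((Fin d → ℝ) × (UT d → ℝ))) from rfl, hLcL, hdetL]
  set T : ((Fin d → ℝ) × (UT d → ℝ)) → ((Fin d → ℝ) × (UT d → ℝ)) :=
    fun θ => (A *ᵥ θ.1 + μ, triL d (A * symMat θ.2 * A)) with hT
  have hTfun : T = fun θ => Lc θ + (μ, 0) := by
    funext θ
    have h1 : Lc θ = (A *ᵥ θ.1, triL d (A * symMat θ.2 * A)) := rfl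
    rw [hT, h1, Prod.mk_add_mk, add_zero]
  -- the projected set
  set ψ : ((Fin d → ℝ) × (UT d → ℝ)) → ((Fin d → ℝ) × Matrix (Fin d) (Fin d) ℝ) :=
    fun θ => (θ.1, symMat θ.2) with hψ
  have hψmeas : Measurable ψ := by
    refine Measurable.prodMk measurable_fst ?_
    refine measurable_pi_lambda _ fun i => measurable_pi_lambda _ fun j => ?_
    by_cases h : i ≤ j
    · have : (fun θ : ((Fin d → ℝ) × (UT d → ℝ)) => symMat θ.2 i j)
          = fun θ => θ.2 ⟨(i, j), h⟩ := by
        funext θ; simp only [symMat, of_apply, dif_pos h]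
      rw [this]
      exact (measurable_pi_apply _).comp measurable_snd
    · have : (fun θ : ((Fin d → ℝ) × (UT d → ℝ)) => symMat θ.2 i j)
          = fun θ => θ.2 ⟨(j, i), le_of_not_ge h⟩ := by
        funext θ; simp only [symMat, of_apply, dif_neg h]
      rw [this]
      exact (measurable_pi_apply _).comp measurable_snd
  have hsymm_mem : ∀ p ∈ Ω, (p.2)ᵀ = p.2 := fun p hp => by
    rw [← Matrix.conjTranspose_eq_transpose_of_trivial]; exact (hpos p hp).1
  have hproj : proj '' Ω = ψ ⁻¹' Ω := by
    ext θ
    constructor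
    · rintro ⟨p, hp, rfl⟩
      show ψ (proj p) ∈ Ω
      have hp2 : ψ (proj p) = p := by
        refine Prod.ext rfl ?_
        show symL d (triL d p.2) = p.2
        exact symL_triL (hsymm_mem p hp)
      rw [hp2]; exact hp
    · intro hθ
      refine ⟨ψ θ, hθ, ?_⟩
      refine Prod.ext rfl ?_
      show triL d (symMat θ.2) = θ.2
      exact triL_symL θ.2
  have hsmeas : MeasurableSet (proj '' Ω) := by
    rw [hproj]; exact hψmeas hΩ
  -- the image identity
  have himg : proj '' ((fun p : (Fin d → ℝ) × Matrix (Fin d) (Fin d) ℝ =>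
      (A *ᵥ p.1 + μ, A * p.2 * A)) '' Ω) = T '' (proj '' Ω) := by
    rw [← Set.image_comp, ← Set.image_comp]
    apply Set.image_congr
    intro p hp
    show proj (A *ᵥ p.1 + μ, A * p.2 * A) = T (proj p)
    refine Prod.ext rfl ?_
    show triL d (A * p.2 * A) = triL d (A * symMat (triL d p.2) * A)
    have : symMat (triL d p.2) = p.2 := symL_triL (hsymm_mem p hp)
    rw [this]
  -- derivative and injectivity
  have hderiv : ∀ x ∈ proj '' Ω, HasFDerivWithinAt T ((fun _ => Lc) x) (proj '' Ω) x := by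
    intro x _
    rw [hTfun]
    exact ((Lc.hasFDerivAt).add_const (μ, 0)).hasFDerivWithinAt
  have hinj : Set.InjOn T (proj '' Ω) := by
    have hTinj : Function.Injective T := by
      intro a b hab
      have h1 : A *ᵥ a.1 + μ = A *ᵥ b.1 + μ := congrArg Prod.fst hab
      have h2 : triL d (A * symMat a.2 * A) = triL d (A * symMat b.2 * A) :=
        congrArg Prod.snd hab
      have h1' : A *ᵥ a.1 = A *ᵥ b.1 := by
        have := add_right_cancel h1
        exact this
      have ha1 : a.1 = b.1 := by
        have h3 := congrArg (fun v => A⁻¹ *ᵥ v) h1'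
        simpa only [Matrix.mulVec_mulVec, Matrix.nonsing_inv_mul A hdetAu,
          Matrix.one_mulVec] using h3
      have hmat : A * symMat a.2 * A = A * symMat b.2 * A := by
        have h4 := congrArg (symL d) h2
        rwa [symL_triL (hconj a.2), symL_triL (hconj b.2)] at h4
      have hsym : symMat a.2 = symMat b.2 := by
        have h5 := congrArg (fun M => A⁻¹ * M * A⁻¹) hmat
        have hred : ∀ u : UT d → ℝ, A⁻¹ * (A * symMat u * A) * A⁻¹ = symMat u := by
          intro u
          rw [← Matrix.mul_assoc, ← Matrix.mul_assoc, Matrix.nonsing_inv_mul A hdetAu,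
            Matrix.one_mul, Matrix.mul_assoc, Matrix.mul_nonsing_inv A hdetAu, Matrix.mul_one]
        rwa [hred, hred] at h5
      have ha2 : a.2 = b.2 := by
        have h6 : triL d (symL d a.2) = triL d (symL d b.2) := congrArg (triL d) hsym
        rwa [triL_symL, triL_symL] at h6
      exact Prod.ext ha1 ha2
    exact hTinj.injOn
  -- change of variables
  show nvol ((fun p : (Fin d → ℝ) × Matrix (Fin d) (Fin d) ℝ =>
      (A *ᵥ p.1 + μ, A * p.2 * A)) '' Ω) = nvol Ω
  rw [nvol, nvol, himg,
    lintegral_image_eq_lintegral_abs_det_fderiv_mul volume hsmeas hderiv hinj]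
  apply setLIntegral_congr_fun hsmeas
  intro ξ hξ
  have hmemΩ : ψ ξ ∈ Ω := by
    rw [hproj] at hξ; exact hξ
  have hpd : (symMat ξ.2).PosDef := hpos _ hmemΩ
  have hDpos : 0 < (symMat ξ.2).det := hpd.det_pos
  have hdetAt : detAt ξ = (symMat ξ.2).det := rfl
  have hdetAtT : detAt (T ξ) = A.det ^ 2 * detAt ξ := by
    show (symMat ((T ξ).2)).det = A.det ^ 2 * detAt ξ
    have h7 : (T ξ).2 = triL d (A * symMat ξ.2 * A) := rfl
    rw [h7, show symMat (triL d (A * symMat ξ.2 * A))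
        = symL d (triL d (A * symMat ξ.2 * A)) from rfl,
      symL_triL (hconj ξ.2), Matrix.det_mul, Matrix.det_mul, hdetAt]
    ring
  have habs : |Lc.det| = A.det ^ (d + 2) := by
    rw [hdetLc, abs_of_pos (pow_pos hdetA _)]
  beta_reduce
  rw [habs, hdetAtT]
  -- the real computation
  set r : ℝ := -((d : ℝ) + 2) / 2 with hr
  have hDnn : 0 ≤ detAt ξ := by rw [hdetAt]; exact hDpos.le
  have e1 : (A.det ^ 2 * detAt ξ) ^ r = (A.det ^ 2) ^ r * detAt ξ ^ r :=
    Real.mul_rpow (by positivity) hDnn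
  have e2 : ((A.det ^ 2 : ℝ)) ^ r = A.det ^ ((2 : ℝ) * r) := by
    rw [← Real.rpow_natCast A.det 2, ← Real.rpow_mul hdetA.le]
    norm_num
  have hreal : A.det ^ (d + 2) * ((A.det ^ 2 * detAt ξ) ^ r) = detAt ξ ^ r := by
    rw [e1, e2, ← mul_assoc, ← Real.rpow_natCast A.det (d + 2), ← Real.rpow_add hdetA]
    have hz : ((d + 2 : ℕ) : ℝ) + (2 : ℝ) * r = 0 := by
      rw [hr]; push_cast; ring
    rw [hz, Real.rpow_zero, one_mul]
  rw [← ENNReal.ofReal_mul (by positivity), hreal]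

end
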